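/- There is an instance of allocating indivisible goods in which a competitive equilibrium exists, yet no competitive-equilibrium allocation is Pareto optimal. Concretely, take 3 agents and 3 items e_1, e_2, e_3 with additive valuations v_1 = (1, 1, 1), v_2 = (2, 1, 1), v_3 = (2, 1, 1) (listing item values in order) and entitlement vector b = (0.4, 0.3, 0.3). Then the allocation ({e_1}, {e_2}, {e_3}) is a competitive equilibrium (e.g. with prices (0.4, 0.3, 0.3)), and every competitive-equilibrium allocation of this instance is Pareto dominated by some allocation (in particular ({e_1}, {e_2}, {e_3}) and ({e_1}, {e_3}, {e_2}) are Pareto dominated by ({e_2}, {e_1}, {e_3}) and ({e_2}, {e_3}, {e_1}) respectively). -/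

import Mathlib

namespace Stmt16

/-- A partition of the items into (possibly empty) bundles. -/
def IsPartition {n m : ℕ} (A : Fin n → Finset (Fin m)) : Prop :=
  (∀ i j, i ≠ j → Disjoint (A i) (A j)) ∧ ∀ e, ∃ i, e ∈ A i

/-- Additive value of a bundle. -/
def bval {m : ℕ} (w : Fin m → ℝ) (S : Finset (Fin m)) : ℝ := ∑ e ∈ S, w e

/-- The additive valuations: v₁ = (1,1,1), v₂ = (2,1,1), v₃ = (2,1,1). -/
def v : Fin 3 → Fin 3 → ℝ := ![![1, 1, 1], ![2, 1, 1], ![2, 1, 1]]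

/-- Entitlement vector b = (0.4, 0.3, 0.3). -/
noncomputable def b : Fin 3 → ℝ := ![0.4, 0.3, 0.3]

/-- A competitive-equilibrium allocation under entitlements `b`. -/
noncomputable def CE (A : Fin 3 → Finset (Fin 3)) : Prop :=
  IsPartition A ∧ ∃ p : Fin 3 → ℝ, (∀ e, 0 ≤ p e) ∧
    ∀ i, (∑ e ∈ A i, p e ≤ b i) ∧
      ∀ S : Finset (Fin 3), (∑ e ∈ S, p e) ≤ b i → bval (v i) S ≤ bval (v i) (A i)

/-- `B` Pareto dominates `A`. -/
def Dominates (B A : Fin 3 → Finset (Fin 3)) : Prop :=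
  (∀ i, bval (v i) (A i) ≤ bval (v i) (B i)) ∧ ∃ i, bval (v i) (A i) < bval (v i) (B i)

lemma classify (A : Fin 3 → Finset (Fin 3)) (h : CE A) :
    A = ![{0}, {1}, {2}] ∨ A = ![{0}, {2}, {1}] := by
  obtain ⟨⟨hdisj, hcov⟩, p, hp, hc⟩ := h
  have hb0 : b 0 = 0.4 := by norm_num [b]
  have hb1 : b 1 = 0.3 := by norm_num [b]
  have hb2 : b 2 = 0.3 := by norm_num [b, Matrix.vecHead, Matrix.vecTail, Matrix.cons_val_two]
  have hv1 : ∀ e, v 1 e = v 2 e := by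
    intro e; fin_cases e <;> simp [v, Matrix.vecHead, Matrix.vecTail]
  have hv1ge : ∀ e : Fin 3, (1:ℝ) ≤ v 1 e := by
    intro e; fin_cases e <;> norm_num [v, Matrix.vecHead, Matrix.vecTail]
  -- Step 1 : p 0 > 0.3
  have hp0 : (0.3:ℝ) < p 0 := by
    by_contra hle
    push_neg at hle
    have h1 : (2:ℝ) ≤ bval (v 1) (A 1) := by
      have := (hc 1).2 {0} (by rw [hb1]; simpa using hle)
      simpa [bval, v] using this
    have h2 : (2:ℝ) ≤ bval (v 2) (A 2) := by
      have := (hc 2).2 {0} (by rw [hb2]; simpa using hle)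
      simpa [bval, v, Matrix.vecHead, Matrix.vecTail] using this
    have h2' : (2:ℝ) ≤ bval (v 1) (A 2) := by
      rw [show bval (v 1) (A 2) = bval (v 2) (A 2) from Finset.sum_congr rfl fun e _ => hv1 e]
      exact h2
    have hd12 : Disjoint (A 1) (A 2) := hdisj 1 2 (by decide)
    have hsum : bval (v 1) (A 1) + bval (v 1) (A 2) = bval (v 1) (A 1 ∪ A 2) :=
      (Finset.sum_union hd12).symm
    have htot : bval (v 1) Finset.univ = 4 := by
      simp [bval, v, Fin.sum_univ_three, Matrix.vecHead, Matrix.vecTail]; norm_num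
    have hle4 : ∀ S : Finset (Fin 3), bval (v 1) S ≤ 4 := by
      intro S
      rw [← htot]
      exact Finset.sum_le_sum_of_subset_of_nonneg (Finset.subset_univ S)
        (fun e _ _ => le_trans (by norm_num) (hv1ge e))
    have huniv : A 1 ∪ A 2 = Finset.univ := by
      by_contra hne
      obtain ⟨e, he⟩ : ∃ e, e ∉ A 1 ∪ A 2 := by
        by_contra h'; push_neg at h'; exact hne (Finset.eq_univ_iff_forall.2 h')
      have hins : bval (v 1) (insert e (A 1 ∪ A 2)) = v 1 e + bval (v 1) (A 1 ∪ A 2) :=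
        Finset.sum_insert he
      have := hle4 (insert e (A 1 ∪ A 2))
      have hge := hv1ge e
      have hge4 : (4:ℝ) ≤ bval (v 1) (A 1 ∪ A 2) := by linarith [hsum ▸ (add_le_add h1 h2')]
      linarith
    have hA0 : A 0 = ∅ := by
      rw [Finset.eq_empty_iff_forall_notMem]
      intro e he0
      have : e ∈ A 1 ∪ A 2 := huniv ▸ Finset.mem_univ e
      rcases Finset.mem_union.1 this with h' | h'
      · exact Finset.disjoint_left.1 (hdisj 0 1 (by decide)) he0 h'
      · exact Finset.disjoint_left.1 (hdisj 0 2 (by decide)) he0 h'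
    have := (hc 0).2 {0} (by rw [hb0]; simp; linarith)
    rw [hA0] at this
    simp [bval, v] at this
    linarith
  -- Step 2 : 0 ∈ A 0
  have h0mem : (0:Fin 3) ∈ A 0 := by
    obtain ⟨i, hi⟩ := hcov 0
    have key : ∀ j, (0:Fin 3) ∈ A j → b j = 0.3 → False := by
      intro j hj hbj
      have hple : p 0 ≤ ∑ e ∈ A j, p e := Finset.single_le_sum (fun e _ => hp e) hj
      have := (hc j).1
      rw [hbj] at this
      linarith
    fin_cases i
    · exact hi
    · exact (key 1 hi hb1).elim
    · exact (key 2 hi hb2).elim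
  -- helper : if an item c ≠ 0 lying in A 0 has price ≤ 0.3, contradiction
  have cheap : ∀ c o : Fin 3, p c ≤ 0.3 → (∀ e : Fin 3, e ≠ 0 → e ≠ c → e = o) →
      c ∈ A 0 → False := by
    intro c o hpc ho hcA0
    have hvc1 : (1:ℝ) ≤ v 1 c := hv1ge c
    have hg1 : (1:ℝ) ≤ bval (v 1) (A 1) := by
      have h' := (hc 1).2 {c} (by rw [hb1]; simpa using hpc)
      have hbc : bval (v 1) {c} = v 1 c := Finset.sum_singleton _ _
      rw [hbc] at h'
      linarith
    have hg2 : (1:ℝ) ≤ bval (v 2) (A 2) := by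
      have h' := (hc 2).2 {c} (by rw [hb2]; simpa using hpc)
      have hbc : bval (v 2) {c} = v 2 c := Finset.sum_singleton _ _
      rw [hbc] at h'
      have := hv1 c
      linarith
    have hsub : ∀ j, j ≠ 0 → A j ⊆ {o} := by
      intro j hj e he
      have h0' : e ∉ A 0 := fun h' => Finset.disjoint_left.1 (hdisj 0 j (Ne.symm hj)) h' he
      have he0 : e ≠ 0 := fun h' => h0' (h' ▸ h0mem)
      have hec : e ≠ c := fun h' => h0' (h' ▸ hcA0)
      simp [ho e he0 hec]
    have hs1 := hsub 1 (by decide)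
    have hs2 := hsub 2 (by decide)
    rcases Finset.eq_empty_or_nonempty (A 1) with hE | ⟨x, hx⟩
    · rw [hE] at hg1; norm_num [bval] at hg1
    · have hxo : x = o := by simpa using hs1 hx
      rcases Finset.eq_empty_or_nonempty (A 2) with hE2 | ⟨y, hy⟩
      · rw [hE2] at hg2; norm_num [bval] at hg2
      · have hyo : y = o := by simpa using hs2 hy
        exact Finset.disjoint_left.1 (hdisj 1 2 (by decide)) (hxo ▸ hx) (hyo ▸ hy)
  -- Step 3 : A 0 = {0}
  have hA0b := (hc 0).1
  rw [hb0] at hA0b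
  have hnot : ∀ c o : Fin 3, c ≠ 0 → (∀ e : Fin 3, e ≠ 0 → e ≠ c → e = o) → c ∉ A 0 := by
    intro c o hc0 ho hcA0
    have hpair : ({0, c} : Finset (Fin 3)) ⊆ A 0 :=
      Finset.insert_subset h0mem (Finset.singleton_subset_iff.2 hcA0)
    have hsumle : p 0 + p c ≤ ∑ e ∈ A 0, p e := by
      have := Finset.sum_le_sum_of_subset_of_nonneg hpair (fun e _ _ => hp e)
      simpa [Finset.sum_pair (Ne.symm hc0)] using this
    exact cheap c o (by linarith) ho hcA0
  have h1not : (1:Fin 3) ∉ A 0 := hnot 1 2 (by decide) (by decide)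
  have h2not : (2:Fin 3) ∉ A 0 := hnot 2 1 (by decide) (by decide)
  have hA0 : A 0 = {0} := by
    ext e
    simp only [Finset.mem_singleton]
    constructor
    · intro he
      fin_cases e
      · rfl
      · exact ((h1not he).elim)
      · exact ((h2not he).elim)
    · rintro rfl; exact h0mem
  -- Step 4
  obtain ⟨i1, hi1⟩ := hcov 1
  obtain ⟨i2, hi2⟩ := hcov 2
  have hi1ne : i1 ≠ 0 := by rintro rfl; exact h1not hi1
  have hi2ne : i2 ≠ 0 := by rintro rfl; exact h2not hi2
  have notboth : ∀ j k : Fin 3, j ≠ 0 → k ≠ 0 → j ≠ k → b j = 0.3 → b k = 0.3 →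
      (1:Fin 3) ∈ A j → (2:Fin 3) ∈ A j → False := by
    intro j k hj0 hk0 hjk hbj hbk ha1 ha2
    have hAke : A k = ∅ := by
      rw [Finset.eq_empty_iff_forall_notMem]
      intro e he
      have e0 : e ≠ 0 := fun h' =>
        Finset.disjoint_left.1 (hdisj 0 k (Ne.symm hk0)) h0mem (h' ▸ he)
      have e1 : e ≠ 1 := fun h' =>
        Finset.disjoint_left.1 (hdisj j k hjk) ha1 (h' ▸ he)
      have e2 : e ≠ 2 := fun h' =>
        Finset.disjoint_left.1 (hdisj j k hjk) ha2 (h' ▸ he)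
      fin_cases e
      · exact absurd rfl e0
      · exact absurd rfl e1
      · exact absurd rfl e2
    have hp1le : p 1 ≤ 0.3 := by
      have h' : p 1 ≤ ∑ e ∈ A j, p e := Finset.single_le_sum (fun e _ => hp e) ha1
      have := (hc j).1
      rw [hbj] at this
      linarith
    have hk' := (hc k).2 {1} (by rw [hbk]; simpa using hp1le)
    rw [hAke] at hk'
    have hvk : (1:ℝ) ≤ v k 1 := by
      fin_cases k
      · exact absurd rfl hk0
      · norm_num [v, Matrix.vecHead, Matrix.vecTail]
      · norm_num [v, Matrix.vecHead, Matrix.vecTail]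
    have : bval (v k) {1} = v k 1 := Finset.sum_singleton _ _
    rw [this] at hk'
    norm_num [bval] at hk'
    linarith
  have hA1eq : ∀ j k : Fin 3, j ≠ 0 → k ≠ 0 → j ≠ k →
      (1:Fin 3) ∈ A j → (2:Fin 3) ∈ A k → A j = {1} ∧ A k = {2} := by
    intro j k hj0 hk0 hjk ha1 ha2
    constructor
    · ext e
      simp only [Finset.mem_singleton]
      constructor
      · intro he
        have e0 : e ≠ 0 := fun h' =>
          Finset.disjoint_left.1 (hdisj 0 j (Ne.symm hj0)) h0mem (h' ▸ he)
        have e2 : e ≠ 2 := fun h' =>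
          Finset.disjoint_left.1 (hdisj j k hjk) (h' ▸ he) ha2
        fin_cases e
        · exact absurd rfl e0
        · rfl
        · exact absurd rfl e2
      · rintro rfl; exact ha1
    · ext e
      simp only [Finset.mem_singleton]
      constructor
      · intro he
        have e0 : e ≠ 0 := fun h' =>
          Finset.disjoint_left.1 (hdisj 0 k (Ne.symm hk0)) h0mem (h' ▸ he)
        have e1 : e ≠ 1 := fun h' =>
          Finset.disjoint_left.1 (hdisj j k hjk) ha1 (h' ▸ he)
        fin_cases e
        · exact absurd rfl e0
        · exact absurd rfl e1
        · rfl
      · rintro rfl; exact ha2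
  fin_cases i1 <;> fin_cases i2
  · exact absurd rfl hi1ne
  · exact absurd rfl hi1ne
  · exact absurd rfl hi1ne
  · exact absurd rfl hi2ne
  · exact (notboth 1 2 (by decide) (by decide) (by decide) hb1 hb2 hi1 hi2).elim
  · -- i1 = 1, i2 = 2
    obtain ⟨h1e, h2e⟩ := hA1eq 1 2 (by decide) (by decide) (by decide) hi1 hi2
    left
    funext i
    fin_cases i
    · exact hA0
    · exact h1e
    · exact h2e
  · exact absurd rfl hi2ne
  · -- i1 = 2, i2 = 1
    obtain ⟨h1e, h2e⟩ := hA1eq 2 1 (by decide) (by decide) (by decide) hi1 hi2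
    right
    funext i
    fin_cases i
    · exact hA0
    · exact h2e
    · exact h1e
  · exact (notboth 2 1 (by decide) (by decide) (by decide) hb2 hb1 hi1 hi2).elim


lemma ce_example : CE ![{0}, {1}, {2}] := by
  refine ⟨⟨?_, ?_⟩, ![0.4, 0.3, 0.3], ?_, ?_⟩
  · intro i j hij
    fin_cases i <;> fin_cases j <;> simp_all
  · intro e; fin_cases e
    · exact ⟨0, by decide⟩
    · exact ⟨1, by decide⟩
    · exact ⟨2, by decide⟩
  · intro e; fin_cases e <;> norm_num
  · intro i
    constructor
    · fin_cases i <;> simp [b]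
    · intro S hS
      fin_cases i <;> fin_cases S <;>
        simp_all [bval, v, b, Matrix.vecHead, Matrix.vecTail, Finset.sum_insert,
          Finset.mem_insert] <;> norm_num at *

lemma part1 : IsPartition ![({1} : Finset (Fin 3)), {0}, {2}] := by
  constructor
  · intro i j hij; fin_cases i <;> fin_cases j <;> simp_all
  · intro e; fin_cases e
    · exact ⟨1, by decide⟩
    · exact ⟨0, by decide⟩
    · exact ⟨2, by decide⟩

lemma part2 : IsPartition ![({1} : Finset (Fin 3)), {2}, {0}] := by
  constructor
  · intro i j hij; fin_cases i <;> fin_cases j <;> simp_all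
  · intro e; fin_cases e
    · exact ⟨2, by decide⟩
    · exact ⟨0, by decide⟩
    · exact ⟨1, by decide⟩

lemma dom1 : Dominates ![{1}, {0}, {2}] ![{0}, {1}, {2}] := by
  constructor
  · intro i
    fin_cases i <;> norm_num [bval, v, Matrix.vecHead, Matrix.vecTail]
  · exact ⟨1, by norm_num [bval, v, Matrix.vecHead, Matrix.vecTail]⟩

lemma dom2 : Dominates ![{1}, {2}, {0}] ![{0}, {2}, {1}] := by
  constructor
  · intro i
    fin_cases i <;> norm_num [bval, v, Matrix.vecHead, Matrix.vecTail]
  · exact ⟨2, by norm_num [bval, v, Matrix.vecHead, Matrix.vecTail, Matrix.cons_val_two]⟩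

/-- a competitive equilibrium exists — ({e₁},{e₂},{e₃}) is a CE —
yet every CE allocation is Pareto dominated by some allocation; in particular
({e₁},{e₂},{e₃}) and ({e₁},{e₃},{e₂}) are Pareto dominated by ({e₂},{e₁},{e₃})
and ({e₂},{e₃},{e₁}) respectively. -/
theorem stmt_16 :
    CE ![{0}, {1}, {2}] ∧
    (∀ A, CE A → ∃ B, IsPartition B ∧ Dominates B A) ∧
    Dominates ![{1}, {0}, {2}] ![{0}, {1}, {2}] ∧
    Dominates ![{1}, {2}, {0}] ![{0}, {2}, {1}] := by
  refine ⟨ce_example, ?_, dom1, dom2⟩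
  intro A hA
  rcases classify A hA with rfl | rfl
  · exact ⟨![{1}, {0}, {2}], part1, dom1⟩
  · exact ⟨![{1}, {2}, {0}], part2, dom2⟩


end Stmt16
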